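/- For the star-shaped network with M = 3 evaluated at the critical flux φ0 = 1/3, the characteristic polynomial of the Jacobian J factors as det(X·I − J) = (X − (4β0/9 − γ)) · (X − (β0·(2+ζ)/3 − γ)) · (X + γ); in particular the eigenvalues of J at φ0 = 1/3 are 4β0/9 − γ, β0·(2+ζ)/3 − γ, and −γ. -/

import Mathlib

set_option maxHeartbeats 1000000

open Matrix Polynomial

/-- Flux matrix of the star-shaped network with `M = 3`. -/
noncomputable def starFlux3 (φ0 : ℝ) : Matrix (Fin 3) (Fin 3) ℝ :=
  !![1 - φ0, 0, φ0; 0, 1 - φ0, φ0; φ0, φ0, 1 - 2 * φ0]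

/-- Infection rates: `β₁ = β₂ = β0`, `β₃ = ζ·β0`. -/
noncomputable def starBeta3 (β0 ζ : ℝ) : Fin 3 → ℝ := ![β0, β0, ζ * β0]

/-- Jacobian of the infected subsystem at the disease-free equilibrium:
`J_{ik} = Σ_j β_j φ_{ij} φ_{kj} − γ·δ_{ik}`. -/
noncomputable def starJac3 (β0 ζ γ φ0 : ℝ) : Matrix (Fin 3) (Fin 3) ℝ :=
  Matrix.of fun i k =>
    (∑ j, starBeta3 β0 ζ j * starFlux3 φ0 i j * starFlux3 φ0 k j)
      - γ * (if i = k then 1 else 0)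

/-- Evaluating the characteristic polynomial gives the determinant of `μ•1 - A`. -/
lemma charpoly_eval_scalar {n : Type*} [Fintype n] [DecidableEq n] {R : Type*} [CommRing R]
    (A : Matrix n n R) (μ : R) :
    A.charpoly.eval μ = (Matrix.scalar n μ - A).det := by
  rw [Matrix.charpoly, ← Polynomial.coe_evalRingHom, RingHom.map_det]
  congr 1
  ext i j
  by_cases h : i = j <;>
    simp [h, charmatrix_apply_eq, charmatrix_apply_ne, Matrix.scalar_apply,
      Matrix.diagonal_apply, Ne.symm]

/-- Spectrum membership is equivalent to being a root of the characteristic polynomial. -/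
lemma mem_spectrum_iff_isRoot_charpoly {n : Type*} [Fintype n] [DecidableEq n]
    {K : Type*} [Field K] (A : Matrix n n K) (μ : K) :
    μ ∈ spectrum K A ↔ A.charpoly.IsRoot μ := by
  rw [spectrum.mem_iff, Matrix.isUnit_iff_isUnit_det, isUnit_iff_ne_zero, not_ne_iff,
    Polynomial.IsRoot, charpoly_eval_scalar]
  congr! 2

/-- At the critical flux `φ0 = 1/3`, the characteristic polynomial of the
star-shaped `M = 3` Jacobian factors explicitly; in particular its
eigenvalues are `4β0/9 − γ`, `β0(2+ζ)/3 − γ` and `−γ`. -/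
theorem star3_charpoly_at_third (β0 ζ γ : ℝ) :
    (starJac3 β0 ζ γ (1 / 3)).charpoly
        = (X - C (4 * β0 / 9 - γ)) * (X - C (β0 * (2 + ζ) / 3 - γ)) * (X + C γ)
      ∧ spectrum ℝ (starJac3 β0 ζ γ (1 / 3))
        = {4 * β0 / 9 - γ, β0 * (2 + ζ) / 3 - γ, -γ} := by
  have hJ : starJac3 β0 ζ γ (1/3) =
      !![(4*β0+ζ*β0)/9 - γ, ζ*β0/9, (2*β0+ζ*β0)/9;
         ζ*β0/9, (4*β0+ζ*β0)/9 - γ, (2*β0+ζ*β0)/9;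
         (2*β0+ζ*β0)/9, (2*β0+ζ*β0)/9, (2*β0+ζ*β0)/9 - γ] := by
    ext i k
    fin_cases i <;> fin_cases k <;>
      · simp [starJac3, starBeta3, starFlux3, Fin.sum_univ_three]
        ring
  have hcp : (starJac3 β0 ζ γ (1 / 3)).charpoly
      = (X - C (4 * β0 / 9 - γ)) * (X - C (β0 * (2 + ζ) / 3 - γ)) * (X + C γ) := by
    apply Polynomial.funext
    intro x
    have hs : (Matrix.scalar (Fin 3) x) = !![x,0,0;0,x,0;0,0,x] := by
      ext i j
      fin_cases i <;> fin_cases j <;>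
        simp [Matrix.scalar_apply, Matrix.diagonal_apply, Matrix.vecHead, Matrix.vecTail]
    rw [charpoly_eval_scalar, hs, hJ, Matrix.det_fin_three]
    simp [Matrix.vecHead, Matrix.vecTail]
    ring
  refine ⟨hcp, ?_⟩
  ext x
  rw [_root_.mem_spectrum_iff_isRoot_charpoly, hcp]
  simp only [IsRoot, eval_mul, eval_sub, eval_add, eval_X, eval_C, mul_eq_zero,
    sub_eq_zero, Set.mem_insert_iff, Set.mem_singleton_iff, add_eq_zero_iff_eq_neg, or_assoc]
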